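/- Let P(S,Y,T) be an ε-IP Blackwell optimal information structure with P(S=s,T=t)>0 for all s∈𝒮, t∈𝒯. For t∈T̃ define A_t = {s∈𝒮 : P(Y=1|S=s,T=t)=1}, B_t = {s∈A_t : P(T=t|S=s)=H_t} and C_t = {s∈𝒮∖A_t : P(T=t|S=s)=H_t}. Then for all t₁,t₂∈T̃ with A_{t₁} strictly contained in A_{t₂}, one has B_{t₁} ⊆ B_{t₂} and C_{t₂} ⊆ C_{t₁}. -/

import Mathlib

open Real
open scoped Classical

noncomputable section

namespace IPPaper

variable {S T : Type} [Fintype S] [Fintype T]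

/-- Marginal probability of the secret `S`. -/
def pS (P : S → Bool → T → ℝ) (s : S) : ℝ := ∑ y, ∑ t, P s y t

/-- Marginal probability of the signal `T`. -/
def pT (P : S → Bool → T → ℝ) (t : T) : ℝ := ∑ s, ∑ y, P s y t

/-- Joint marginal on `(S,T)`. -/
def pST (P : S → Bool → T → ℝ) (s : S) (t : T) : ℝ := ∑ y, P s y t

/-- Joint marginal on `(Y,T)`. -/
def pYT (P : S → Bool → T → ℝ) (y : Bool) (t : T) : ℝ := ∑ s, P s y t

/-- Joint marginal on `(S,Y)`. -/
def pSY (P : S → Bool → T → ℝ) (s : S) (y : Bool) : ℝ := ∑ t, P s y t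

/-- An information structure: nonnegative, sums to one, every secret has positive
probability. -/
def InfoStructure (P : S → Bool → T → ℝ) : Prop :=
  (∀ s y t, 0 ≤ P s y t) ∧ (∑ s, ∑ y, ∑ t, P s y t) = 1 ∧ ∀ s, 0 < pS P s

/-- Conditional probability `P(T = t | S = s)`. -/
def condTS (P : S → Bool → T → ℝ) (t : T) (s : S) : ℝ := pST P s t / pS P s

/-- Conditional probability `P(S = s | T = t)`. -/
def condST (P : S → Bool → T → ℝ) (s : S) (t : T) : ℝ := pST P s t / pT P t

/-- Posterior `P(Y = 1 | T = t)`. -/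
def postYT (P : S → Bool → T → ℝ) (t : T) : ℝ := pYT P true t / pT P t

/-- Posterior `P(Y = 1 | S = s, T = t)`. -/
def postYST (P : S → Bool → T → ℝ) (s : S) (t : T) : ℝ := P s true t / pST P s t

/-- Prior conditional `P(Y = 1 | S = s)`. -/
def qS (P : S → Bool → T → ℝ) (s : S) : ℝ := pSY P s true / pS P s

/-- `ε`-inferential privacy. -/
def IsIP (ε : ℝ) (P : S → Bool → T → ℝ) : Prop :=
  ∀ s₁ s₂ t, condTS P t s₁ ≤ Real.exp ε * condTS P t s₂

/-- Blackwell dominance via a row-stochastic garbling kernel. -/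
def BlackwellDom {T₁ T₂ : Type} [Fintype T₁] [Fintype T₂]
    (Q₁ : Bool → T₁ → ℝ) (Q₂ : Bool → T₂ → ℝ) : Prop :=
  ∃ G : T₁ → T₂ → ℝ, (∀ a b, 0 ≤ G a b) ∧ (∀ a, ∑ b, G a b = 1) ∧
    ∀ y b, Q₂ y b = ∑ a, Q₁ y a * G a b

/-- `ε`-IP Blackwell optimality: no ε-IP information structure with the same
marginal on `(S,Y)` (over any finite signal set) strictly Blackwell dominates it. -/
def BlackwellOptimal (ε : ℝ) (P : S → Bool → T → ℝ) : Prop :=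
  InfoStructure P ∧ IsIP ε P ∧
  ¬ ∃ (n : ℕ) (P' : S → Bool → Fin n → ℝ),
      InfoStructure P' ∧ IsIP ε P' ∧ (∀ s y, pSY P' s y = pSY P s y) ∧
      BlackwellDom (pYT P') (pYT P) ∧ ¬ BlackwellDom (pYT P) (pYT P')

/-- Membership in `T̃`: signals with positive probability and nondegenerate posterior. -/
def inTildeT (P : S → Bool → T → ℝ) (t : T) : Prop :=
  0 < pT P t ∧ postYT P t ≠ 0 ∧ postYT P t ≠ 1

/-- `L_t = min_s P(T=t|S=s)`. -/
def Lval [Nonempty S] (P : S → Bool → T → ℝ) (t : T) : ℝ :=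
  Finset.univ.inf' Finset.univ_nonempty (fun s => condTS P t s)

/-- `H_t = max_s P(T=t|S=s)`. -/
def Hval [Nonempty S] (P : S → Bool → T → ℝ) (t : T) : ℝ :=
  Finset.univ.sup' Finset.univ_nonempty (fun s => condTS P t s)

/-- Expected utility `Σ_{t : P(T=t)>0} P(T=t)·u(P(Y=1|T=t))`. -/
def EU (P : S → Bool → T → ℝ) (u : ℝ → ℝ) : ℝ :=
  ∑ t ∈ Finset.univ.filter (fun t => 0 < pT P t), pT P t * u (postYT P t)

end IPPaper
namespace IPPaper

open Finset

variable {S T : Type} [Fintype S] [Fintype T]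

/-! ### The potential Φ -/

/-- `phi x y = x²/(x+y)`, a positively homogeneous convex function. -/
def phi (x y : ℝ) : ℝ := x ^ 2 / (x + y)

lemma phi_zero : phi 0 0 = 0 := by simp [phi]

lemma phi_add_le {x₁ y₁ x₂ y₂ : ℝ} (hx₁ : 0 ≤ x₁) (hy₁ : 0 ≤ y₁)
    (hx₂ : 0 ≤ x₂) (hy₂ : 0 ≤ y₂) :
    phi (x₁ + x₂) (y₁ + y₂) ≤ phi x₁ y₁ + phi x₂ y₂ := by
  unfold phi
  rcases eq_or_lt_of_le (by linarith : (0:ℝ) ≤ x₁ + y₁) with h₁ | h₁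
  · have hx : x₁ = 0 := by linarith
    have hy : y₁ = 0 := by linarith
    simp [hx, hy]
  rcases eq_or_lt_of_le (by linarith : (0:ℝ) ≤ x₂ + y₂) with h₂ | h₂
  · have hx : x₂ = 0 := by linarith
    have hy : y₂ = 0 := by linarith
    simp [hx, hy]
  have hne₁ : (x₁ + y₁) ≠ 0 := ne_of_gt h₁
  have hne₂ : (x₂ + y₂) ≠ 0 := ne_of_gt h₂
  have h12 : (0:ℝ) < (x₁ + y₁) + (x₂ + y₂) := by linarith
  rw [div_add_div _ _ hne₁ hne₂]
  rw [div_le_div_iff₀ (by linarith) (mul_pos h₁ h₂)]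
  have key : 0 ≤ (x₁ * (x₂ + y₂) - x₂ * (x₁ + y₁)) ^ 2 := sq_nonneg _
  nlinarith [key]

lemma phi_smul {x y : ℝ} (c : ℝ) (hc : 0 ≤ c) : phi (c * x) (c * y) = c * phi x y := by
  unfold phi
  have h : c * x + c * y = c * (x + y) := by ring
  rw [h]
  rcases eq_or_lt_of_le hc with rfl | hc'
  · simp
  rcases eq_or_ne (x + y) 0 with h0 | h0
  · simp [h0]
  · field_simp

lemma phi_nonneg {x y : ℝ} (hx : 0 ≤ x) (hy : 0 ≤ y) : 0 ≤ phi x y :=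
  div_nonneg (sq_nonneg _) (by linarith)

lemma phi_sum_le {ι : Type*} (s : Finset ι) (f g : ι → ℝ)
    (hf : ∀ i ∈ s, 0 ≤ f i) (hg : ∀ i ∈ s, 0 ≤ g i) :
    phi (∑ i ∈ s, f i) (∑ i ∈ s, g i) ≤ ∑ i ∈ s, phi (f i) (g i) := by
  classical
  induction s using Finset.induction_on with
  | empty => simp [phi_zero]
  | insert _ _ hnotmem ih =>
    rename_i a s'
    rw [Finset.sum_insert hnotmem, Finset.sum_insert hnotmem, Finset.sum_insert hnotmem]
    have h1 : phi (f a + ∑ i ∈ s', f i) (g a + ∑ i ∈ s', g i) ≤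
        phi (f a) (g a) + phi (∑ i ∈ s', f i) (∑ i ∈ s', g i) :=
      phi_add_le (hf a (Finset.mem_insert_self a s'))
        (hg a (Finset.mem_insert_self a s'))
        (Finset.sum_nonneg fun i hi => hf i (Finset.mem_insert_of_mem hi))
        (Finset.sum_nonneg fun i hi => hg i (Finset.mem_insert_of_mem hi))
    have h2 := ih (fun i hi => hf i (Finset.mem_insert_of_mem hi))
      (fun i hi => hg i (Finset.mem_insert_of_mem hi))
    linarith

/-- The potential attached to a joint distribution on `(Y,T)`. -/
def Phi {T : Type} [Fintype T] (Q : Bool → T → ℝ) : ℝ :=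
  ∑ t, phi (Q true t) (Q false t)

/-- Garbling decreases the potential Φ. -/
lemma blackwellDom_phi_le {T₁ T₂ : Type} [Fintype T₁] [Fintype T₂]
    (Q₁ : Bool → T₁ → ℝ) (Q₂ : Bool → T₂ → ℝ)
    (h1 : ∀ y t, 0 ≤ Q₁ y t) (hd : BlackwellDom Q₁ Q₂) :
    Phi Q₂ ≤ Phi Q₁ := by
  obtain ⟨G, hG0, hG1, hrep⟩ := hd
  unfold Phi
  calc ∑ b, phi (Q₂ true b) (Q₂ false b)
      = ∑ b, phi (∑ a, Q₁ true a * G a b) (∑ a, Q₁ false a * G a b) := by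
        refine Finset.sum_congr rfl fun b _ => ?_
        rw [hrep true b, hrep false b]
    _ ≤ ∑ b, ∑ a, phi (Q₁ true a * G a b) (Q₁ false a * G a b) := by
        refine Finset.sum_le_sum fun b _ => ?_
        exact phi_sum_le _ _ _ (fun a _ => mul_nonneg (h1 true a) (hG0 a b))
          (fun a _ => mul_nonneg (h1 false a) (hG0 a b))
    _ = ∑ a, ∑ b, phi (Q₁ true a * G a b) (Q₁ false a * G a b) := Finset.sum_comm
    _ = ∑ a, ∑ b, G a b * phi (Q₁ true a) (Q₁ false a) := by
        refine Finset.sum_congr rfl fun a _ => Finset.sum_congr rfl fun b _ => ?_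
        rw [mul_comm (Q₁ true a) (G a b), mul_comm (Q₁ false a) (G a b),
          phi_smul _ (hG0 a b)]
    _ = ∑ a, phi (Q₁ true a) (Q₁ false a) := by
        refine Finset.sum_congr rfl fun a _ => ?_
        rw [← Finset.sum_mul, hG1 a, one_mul]

end IPPaper
namespace IPPaper

open Finset

/-- Split a sum over a fintype into two distinguished elements plus the rest. -/
lemma sum_split {T : Type} [Fintype T] (t₁ t₂ : T) (h12 : t₁ ≠ t₂) (F : T → ℝ) :
    ∑ a, F a = F t₁ + F t₂ + ∑ a ∈ (Finset.univ.erase t₁).erase t₂, F a := by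
  have h2m : t₂ ∈ Finset.univ.erase t₁ :=
    Finset.mem_erase.mpr ⟨h12.symm, Finset.mem_univ t₂⟩
  rw [← Finset.add_sum_erase _ F (Finset.mem_univ t₁), ← Finset.add_sum_erase _ F h2m]
  ring

/-- A two-signal mean-preserving spread Blackwell-dominates the original. -/
lemma twoSignalDom {T : Type} [Fintype T] (Q Q' : Bool → T → ℝ)
    (t₁ t₂ : T) (h12 : t₁ ≠ t₂)
    (hoff : ∀ y t, t ≠ t₁ → t ≠ t₂ → Q' y t = Q y t)
    (h1 : Q' true t₁ * (Q true t₁ + Q false t₁) ≤ Q true t₁ * (Q' true t₁ + Q' false t₁))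
    (h2 : Q true t₁ * (Q' true t₂ + Q' false t₂) ≤ Q' true t₂ * (Q true t₁ + Q false t₁))
    (h3 : Q true t₂ * (Q' true t₂ + Q' false t₂) ≤ Q' true t₂ * (Q true t₂ + Q false t₂))
    (h4 : Q' true t₁ * (Q true t₂ + Q false t₂) ≤ Q true t₂ * (Q' true t₁ + Q' false t₁))
    (h5 : Q' true t₁ * Q' false t₂ < Q' false t₁ * Q' true t₂)
    (hc1 : Q' true t₁ + Q' true t₂ = Q true t₁ + Q true t₂)
    (hc2 : Q' false t₁ + Q' false t₂ = Q false t₁ + Q false t₂) :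
    BlackwellDom Q' Q := by
  classical
  set a₁ := Q true t₁ with ha₁
  set b₁ := Q false t₁ with hb₁
  set a₂ := Q true t₂ with ha₂
  set b₂ := Q false t₂ with hb₂
  set A := Q' true t₁ with hA
  set B := Q' false t₁ with hB
  set C := Q' true t₂ with hC
  set D := Q' false t₂ with hD
  set det := A * D - B * C with hdetdef
  have hdet : det < 0 := by rw [hdetdef]; linarith
  have hdet_ne : det ≠ 0 := ne_of_lt hdet
  set g11 := (a₁ * D - b₁ * C) / det with hg11def
  set g21 := (A * b₁ - B * a₁) / det with hg21def
  have hnum1 : a₁ * D - b₁ * C ≤ 0 := by nlinarith [h2]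
  have hnum2 : A * b₁ - B * a₁ ≤ 0 := by nlinarith [h1]
  have hg11₀ : 0 ≤ g11 := by
    rw [hg11def, div_nonneg_iff]; right; exact ⟨hnum1, hdet.le⟩
  have hg21₀ : 0 ≤ g21 := by
    rw [hg21def, div_nonneg_iff]; right; exact ⟨hnum2, hdet.le⟩
  have hg11₁ : g11 ≤ 1 := by
    rw [hg11def, div_le_iff_of_neg hdet, one_mul]
    have e1 : det - (a₁ * D - b₁ * C) = a₂ * D - b₂ * C := by
      have eA : A = a₁ + a₂ - C := by linarith
      have eB : B = b₁ + b₂ - D := by linarith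
      rw [hdetdef, eA, eB]; ring
    nlinarith [h3, e1]
  have hg21₁ : g21 ≤ 1 := by
    rw [hg21def, div_le_iff_of_neg hdet, one_mul]
    have e1 : det - (A * b₁ - B * a₁) = A * b₂ - B * a₂ := by
      have eC : C = a₁ + a₂ - A := by linarith
      have eD : D = b₁ + b₂ - B := by linarith
      rw [hdetdef, eC, eD]; ring
    nlinarith [h4, e1]
  have eq_t1_true : A * g11 + C * g21 = a₁ := by
    rw [hg11def, hg21def]
    field_simp
    ring
  have eq_t1_false : B * g11 + D * g21 = b₁ := by
    rw [hg11def, hg21def]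
    field_simp
    ring
  set row : ℝ → ℝ → T → ℝ := fun u v q => if q = t₁ then u else if q = t₂ then v else 0
    with hrow
  have row_t₁ : ∀ u v : ℝ, row u v t₁ = u := by intro u v; simp [hrow]
  have row_t₂ : ∀ u v : ℝ, row u v t₂ = v := by intro u v; simp [hrow, h12.symm]
  have row_other : ∀ (u v : ℝ) (q : T), q ≠ t₁ → q ≠ t₂ → row u v q = 0 := by
    intro u v q hq1 hq2; simp [hrow, hq1, hq2]
  have row_sum : ∀ u v : ℝ, ∑ q, row u v q = u + v := by
    intro u v
    have hpt : ∀ q, row u v q = (if q = t₁ then u else 0) + (if q = t₂ then v else 0) := by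
      intro q
      by_cases hq1 : q = t₁
      · subst hq1; simp [hrow, h12]
      · by_cases hq2 : q = t₂
        · subst hq2; simp [hrow, h12.symm]
        · simp [hrow, hq1, hq2]
    rw [Finset.sum_congr rfl fun q _ => hpt q, Finset.sum_add_distrib,
      Finset.sum_ite_eq' Finset.univ t₁ (fun _ => u),
      Finset.sum_ite_eq' Finset.univ t₂ (fun _ => v)]
    simp
  refine ⟨fun p q =>
    if p = t₁ then row g11 (1 - g11) q
    else if p = t₂ then row g21 (1 - g21) q
    else if q = p then 1 else 0, ?_, ?_, ?_⟩
  · intro p q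
    dsimp only
    by_cases hp1 : p = t₁
    · rw [if_pos hp1]
      by_cases hq1 : q = t₁
      · rw [hq1, row_t₁]; exact hg11₀
      · by_cases hq2 : q = t₂
        · rw [hq2, row_t₂]; linarith
        · rw [row_other _ _ _ hq1 hq2]
    · rw [if_neg hp1]
      by_cases hp2 : p = t₂
      · rw [if_pos hp2]
        by_cases hq1 : q = t₁
        · rw [hq1, row_t₁]; exact hg21₀
        · by_cases hq2 : q = t₂
          · rw [hq2, row_t₂]; linarith
          · rw [row_other _ _ _ hq1 hq2]
      · rw [if_neg hp2]
        split_ifs <;> norm_num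
  · intro p
    dsimp only
    by_cases hp1 : p = t₁
    · simp only [if_pos hp1]; rw [row_sum]; ring
    · simp only [if_neg hp1]
      by_cases hp2 : p = t₂
      · simp only [if_pos hp2]; rw [row_sum]; ring
      · simp only [if_neg hp2]
        rw [Finset.sum_ite_eq' Finset.univ p (fun _ => (1:ℝ))]
        simp
  · intro y b
    dsimp only
    have hsummand : ∀ a : T, Q' y a *
        (if a = t₁ then row g11 (1 - g11) b
         else if a = t₂ then row g21 (1 - g21) b
         else if b = a then 1 else 0) =
        (if a = t₁ then Q' y t₁ * row g11 (1 - g11) b else 0) +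
        (if a = t₂ then Q' y t₂ * row g21 (1 - g21) b else 0) +
        (if b = a ∧ a ≠ t₁ ∧ a ≠ t₂ then Q' y a else 0) := by
      intro a
      by_cases ha1 : a = t₁
      · subst ha1; simp [h12]
      · by_cases ha2 : a = t₂
        · subst ha2; simp [h12.symm, ha1]
        · simp only [if_neg ha1, if_neg ha2]
          by_cases hba : b = a
          · simp [hba, ha1, ha2]
          · simp [hba, ha1, ha2]
    rw [Finset.sum_congr rfl fun a _ => hsummand a]
    rw [Finset.sum_add_distrib, Finset.sum_add_distrib,
      Finset.sum_ite_eq' Finset.univ t₁ (fun _ => Q' y t₁ * row g11 (1 - g11) b),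
      Finset.sum_ite_eq' Finset.univ t₂ (fun _ => Q' y t₂ * row g21 (1 - g21) b)]
    simp only [Finset.mem_univ, if_true]
    by_cases hb1 : b = t₁
    · subst hb1
      rw [Finset.sum_eq_zero (fun a _ => by
        by_cases hba : b = a
        · rw [if_neg]; rintro ⟨h', h1', h2'⟩; exact h1' hba.symm
        · rw [if_neg]; rintro ⟨h', h1', h2'⟩; exact hba h')]
      rw [row_t₁, row_t₁]
      cases y
      · show b₁ = B * g11 + D * g21 + 0
        rw [eq_t1_false]; ring
      · show a₁ = A * g11 + C * g21 + 0
        rw [eq_t1_true]; ring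
    · by_cases hb2 : b = t₂
      · subst hb2
        rw [Finset.sum_eq_zero (fun a _ => by
          by_cases hba : b = a
          · rw [if_neg]; rintro ⟨h', h1', h2'⟩; exact h2' hba.symm
          · rw [if_neg]; rintro ⟨h', h1', h2'⟩; exact hba h')]
        rw [row_t₂, row_t₂]
        cases y
        · show b₂ = B * (1 - g11) + D * (1 - g21) + 0
          linear_combination eq_t1_false - hc2
        · show a₂ = A * (1 - g11) + C * (1 - g21) + 0
          linear_combination eq_t1_true - hc1
      · rw [row_other _ _ _ hb1 hb2, row_other _ _ _ hb1 hb2]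
        have hps : ∀ a : T, (if b = a ∧ a ≠ t₁ ∧ a ≠ t₂ then Q' y a else 0) =
            (if b = a then Q' y a else 0) := by
          intro a
          by_cases hba : b = a
          · subst hba; simp [hb1, hb2]
          · simp [hba]
        rw [Finset.sum_congr rfl fun a _ => hps a,
          Finset.sum_ite_eq Finset.univ b (fun a => Q' y a)]
        simp only [Finset.mem_univ, if_true]
        rw [hoff y b hb1 hb2]
        ring

end IPPaper
set_option linter.unusedSectionVars false

namespace IPPaper

open Finset

variable {S T : Type} [Fintype S] [Fintype T]

lemma pST_eq (P : S → Bool → T → ℝ) (s : S) (t : T) :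
    pST P s t = P s true t + P s false t := by
  simp [pST, Fintype.sum_bool]

lemma pT_eq (P : S → Bool → T → ℝ) (t : T) :
    pT P t = pYT P true t + pYT P false t := by
  unfold pT pYT
  rw [← Finset.sum_add_distrib]
  refine Finset.sum_congr rfl fun s _ => ?_
  simp [Fintype.sum_bool]

lemma pYT_nonneg {P : S → Bool → T → ℝ} (h0 : ∀ s y t, 0 ≤ P s y t) (y : Bool) (t : T) :
    0 ≤ pYT P y t :=
  Finset.sum_nonneg fun s _ => h0 s y t

lemma pST_nonneg {P : S → Bool → T → ℝ} (h0 : ∀ s y t, 0 ≤ P s y t) (s : S) (t : T) :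
    0 ≤ pST P s t :=
  Finset.sum_nonneg fun y _ => h0 s y t

lemma le_pYT {P : S → Bool → T → ℝ} (h0 : ∀ s y t, 0 ≤ P s y t) (s : S) (y : Bool) (t : T) :
    P s y t ≤ pYT P y t :=
  Finset.single_le_sum (fun s' _ => h0 s' y t) (Finset.mem_univ s)

/-- With positive `pST`, the posterior equals 1 iff the `false` mass vanishes. -/
lemma postYST_eq_one_iff {P : S → Bool → T → ℝ} {s : S} {t : T}
    (hst : 0 < pST P s t) : postYST P s t = 1 ↔ P s false t = 0 := by
  unfold postYST
  rw [div_eq_one_iff_eq (ne_of_gt hst), pST_eq]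
  constructor
  · intro h; linarith
  · intro h; rw [h]; ring

lemma condTS_le_Hval [Nonempty S] (P : S → Bool → T → ℝ) (t : T) (s : S) :
    condTS P t s ≤ Hval P t :=
  Finset.le_sup' (fun s' => condTS P t s') (Finset.mem_univ s)

lemma Hval_le_exp_mul [Nonempty S] {ε : ℝ} {P : S → Bool → T → ℝ} (hIP : IsIP ε P)
    (t : T) (s : S) : Hval P t ≤ Real.exp ε * condTS P t s := by
  obtain ⟨s', -, hs'⟩ := Finset.exists_mem_eq_sup' Finset.univ_nonempty
    (fun s'' => condTS P t s'')
  rw [Hval, hs']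
  exact hIP s' s t

/-- The elementary mass-transfer operation: move `x` of the mass of `(s₀, y₀)`
from signal `t_f` to signal `t_t`. -/
def move (P : S → Bool → T → ℝ) (s₀ : S) (y₀ : Bool) (t_f t_t : T) (x : ℝ) :
    S → Bool → T → ℝ :=
  fun s y t => P s y t + (if s = s₀ ∧ y = y₀ ∧ t = t_t then x else 0)
    - (if s = s₀ ∧ y = y₀ ∧ t = t_f then x else 0)

lemma pST_move (P : S → Bool → T → ℝ) (s₀ : S) (y₀ : Bool) (t_f t_t : T) (x : ℝ)
    (s : S) (t : T) :
    pST (move P s₀ y₀ t_f t_t x) s t =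
      pST P s t + (if s = s₀ ∧ t = t_t then x else 0)
        - (if s = s₀ ∧ t = t_f then x else 0) := by
  unfold pST move
  rw [Finset.sum_sub_distrib, Finset.sum_add_distrib]
  congr 1
  · congr 1
    by_cases hs : s = s₀
    · by_cases ht : t = t_t
      · simp only [hs, ht, true_and, and_true, if_pos rfl]
        cases y₀ <;> simp [Fintype.sum_bool]
      · simp [hs, ht]
    · simp [hs]
  · by_cases hs : s = s₀
    · by_cases ht : t = t_f
      · simp only [hs, ht, true_and, and_true, if_pos rfl]
        cases y₀ <;> simp [Fintype.sum_bool]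
      · simp [hs, ht]
    · simp [hs]

lemma pYT_move (P : S → Bool → T → ℝ) (s₀ : S) (y₀ : Bool) (t_f t_t : T) (x : ℝ)
    (y : Bool) (t : T) :
    pYT (move P s₀ y₀ t_f t_t x) y t =
      pYT P y t + (if y = y₀ ∧ t = t_t then x else 0)
        - (if y = y₀ ∧ t = t_f then x else 0) := by
  unfold pYT move
  rw [Finset.sum_sub_distrib, Finset.sum_add_distrib]
  congr 1
  · congr 1
    by_cases hy : y = y₀
    · by_cases ht : t = t_t
      · simp only [hy, ht, true_and, and_true, if_pos rfl]
        rw [Finset.sum_ite_eq' Finset.univ s₀ (fun _ => x)]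
        simp
      · simp [hy, ht]
    · simp [hy]
  · by_cases hy : y = y₀
    · by_cases ht : t = t_f
      · simp only [hy, ht, true_and, and_true, if_pos rfl]
        rw [Finset.sum_ite_eq' Finset.univ s₀ (fun _ => x)]
        simp
      · simp [hy, ht]
    · simp [hy]

lemma pSY_move (P : S → Bool → T → ℝ) (s₀ : S) (y₀ : Bool) (t_f t_t : T) (x : ℝ)
    (s : S) (y : Bool) :
    pSY (move P s₀ y₀ t_f t_t x) s y = pSY P s y := by
  unfold pSY move
  rw [Finset.sum_sub_distrib, Finset.sum_add_distrib]
  have e1 : ∑ t, (if s = s₀ ∧ y = y₀ ∧ t = t_t then x else 0) =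
      if s = s₀ ∧ y = y₀ then x else 0 := by
    by_cases h : s = s₀ ∧ y = y₀
    · simp only [h.1, h.2, true_and, if_pos rfl]
      rw [Finset.sum_ite_eq' Finset.univ t_t (fun _ => x)]
      simp
    · rw [if_neg h]
      refine Finset.sum_eq_zero fun t _ => ?_
      rw [if_neg (fun hh => h ⟨hh.1, hh.2.1⟩)]
  have e2 : ∑ t, (if s = s₀ ∧ y = y₀ ∧ t = t_f then x else 0) =
      if s = s₀ ∧ y = y₀ then x else 0 := by
    by_cases h : s = s₀ ∧ y = y₀
    · simp only [h.1, h.2, true_and, if_pos rfl]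
      rw [Finset.sum_ite_eq' Finset.univ t_f (fun _ => x)]
      simp
    · rw [if_neg h]
      refine Finset.sum_eq_zero fun t _ => ?_
      rw [if_neg (fun hh => h ⟨hh.1, hh.2.1⟩)]
  rw [e1, e2]
  ring

lemma pS_move (P : S → Bool → T → ℝ) (s₀ : S) (y₀ : Bool) (t_f t_t : T) (x : ℝ)
    (s : S) : pS (move P s₀ y₀ t_f t_t x) s = pS P s := by
  unfold pS
  refine Finset.sum_congr rfl fun y _ => ?_
  exact pSY_move P s₀ y₀ t_f t_t x s y

lemma condTS_move (P : S → Bool → T → ℝ) (s₀ : S) (y₀ : Bool) (t_f t_t : T) (x : ℝ)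
    (t : T) (s : S) :
    condTS (move P s₀ y₀ t_f t_t x) t s =
      condTS P t s + (if s = s₀ ∧ t = t_t then x / pS P s₀ else 0)
        - (if s = s₀ ∧ t = t_f then x / pS P s₀ else 0) := by
  unfold condTS
  rw [pS_move, pST_move]
  by_cases h1 : s = s₀ ∧ t = t_t
  · by_cases h2 : s = s₀ ∧ t = t_f
    · rw [if_pos h1, if_pos h2, if_pos h1, if_pos h2, h1.1]; ring
    · rw [if_pos h1, if_neg h2, if_pos h1, if_neg h2, h1.1]; ring
  · by_cases h2 : s = s₀ ∧ t = t_f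
    · rw [if_neg h1, if_pos h2, if_neg h1, if_pos h2, h2.1]; ring
    · rw [if_neg h1, if_neg h2, if_neg h1, if_neg h2]; ring

lemma info_move {P : S → Bool → T → ℝ} (hP : InfoStructure P) {s₀ : S} {y₀ : Bool}
    {t_f t_t : T} {x : ℝ} (hft : t_f ≠ t_t) (hx0 : 0 ≤ x) (hxle : x ≤ P s₀ y₀ t_f) :
    InfoStructure (move P s₀ y₀ t_f t_t x) := by
  obtain ⟨h0, h1, h2⟩ := hP
  refine ⟨?_, ?_, ?_⟩
  · intro s y t
    unfold move
    by_cases hf : s = s₀ ∧ y = y₀ ∧ t = t_f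
    · rw [if_pos hf, if_neg (fun hh : s = s₀ ∧ y = y₀ ∧ t = t_t =>
        hft (hf.2.2.symm.trans hh.2.2))]
      have h' := hxle
      rw [← hf.1, ← hf.2.1, ← hf.2.2] at h'
      linarith
    · rw [if_neg hf]
      have := h0 s y t
      by_cases ht : s = s₀ ∧ y = y₀ ∧ t = t_t
      · rw [if_pos ht]; linarith
      · rw [if_neg ht]; linarith
  · calc ∑ s, ∑ y, ∑ t, move P s₀ y₀ t_f t_t x s y t
        = ∑ s, ∑ y, pSY (move P s₀ y₀ t_f t_t x) s y := rfl
      _ = ∑ s, ∑ y, pSY P s y := by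
          refine Finset.sum_congr rfl fun s _ => Finset.sum_congr rfl fun y _ => ?_
          exact pSY_move P s₀ y₀ t_f t_t x s y
      _ = 1 := h1
  · intro s
    rw [pS_move]
    exact h2 s

lemma isIP_move {ε : ℝ} {P : S → Bool → T → ℝ} [Nonempty S] (hε : 0 ≤ ε)
    (hP : InfoStructure P) (hIP : IsIP ε P) {s₀ : S} {y₀ : Bool} {t_f t_t : T} {x : ℝ}
    (hft : t_f ≠ t_t) (hx0 : 0 ≤ x)
    (hB : ∀ s, condTS P t_t s₀ + x / pS P s₀ ≤ Real.exp ε * condTS P t_t s)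
    (hC : ∀ s, condTS P t_f s ≤ Real.exp ε * (condTS P t_f s₀ - x / pS P s₀)) :
    IsIP ε (move P s₀ y₀ t_f t_t x) := by
  have hexp1 : (1:ℝ) ≤ Real.exp ε := Real.one_le_exp hε
  have hpS : ∀ s, 0 < pS P s := hP.2.2
  have hcnn : ∀ t s, 0 ≤ condTS P t s := fun t s =>
    div_nonneg (pST_nonneg hP.1 s t) (hpS s).le
  have hx' : 0 ≤ x / pS P s₀ := div_nonneg hx0 (hpS s₀).le
  have hCpos : 0 ≤ condTS P t_f s₀ - x / pS P s₀ := by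
    by_contra h
    push_neg at h
    have h1 := hC s₀
    have h2 : Real.exp ε * (condTS P t_f s₀ - x / pS P s₀) < 0 :=
      mul_neg_of_pos_of_neg (Real.exp_pos ε) h
    have := hcnn t_f s₀
    linarith
  intro s₁ s₂ t
  rw [condTS_move, condTS_move]
  by_cases ht1 : t = t_t
  · rw [ht1]
    rw [if_neg (fun h : s₁ = s₀ ∧ t_t = t_f => hft h.2.symm),
      if_neg (fun h : s₂ = s₀ ∧ t_t = t_f => hft h.2.symm)]
    by_cases hs₁ : s₁ = s₀
    · rw [if_pos ⟨hs₁, rfl⟩, hs₁]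
      by_cases hs₂ : s₂ = s₀
      · rw [if_pos ⟨hs₂, rfl⟩, hs₂]
        nlinarith [hcnn t_t s₀, hx']
      · rw [if_neg (fun h : s₂ = s₀ ∧ t_t = t_t => hs₂ h.1)]
        have := hB s₂
        linarith
    · rw [if_neg (fun h : s₁ = s₀ ∧ t_t = t_t => hs₁ h.1)]
      by_cases hs₂ : s₂ = s₀
      · rw [if_pos ⟨hs₂, rfl⟩, hs₂]
        have h1 := hIP s₁ s₀ t_t
        nlinarith [Real.exp_pos ε]
      · rw [if_neg (fun h : s₂ = s₀ ∧ t_t = t_t => hs₂ h.1)]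
        have := hIP s₁ s₂ t_t
        linarith
  · by_cases ht2 : t = t_f
    · rw [ht2]
      rw [if_neg (fun h : s₁ = s₀ ∧ t_f = t_t => hft h.2),
        if_neg (fun h : s₂ = s₀ ∧ t_f = t_t => hft h.2)]
      by_cases hs₁ : s₁ = s₀
      · rw [if_pos ⟨hs₁, rfl⟩, hs₁]
        by_cases hs₂ : s₂ = s₀
        · rw [if_pos ⟨hs₂, rfl⟩, hs₂]
          nlinarith [hCpos]
        · rw [if_neg (fun h : s₂ = s₀ ∧ t_f = t_f => hs₂ h.1)]
          have := hIP s₀ s₂ t_f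
          linarith
      · rw [if_neg (fun h : s₁ = s₀ ∧ t_f = t_f => hs₁ h.1)]
        by_cases hs₂ : s₂ = s₀
        · rw [if_pos ⟨hs₂, rfl⟩, hs₂]
          have := hC s₁
          linarith
        · rw [if_neg (fun h : s₂ = s₀ ∧ t_f = t_f => hs₂ h.1)]
          have := hIP s₁ s₂ t_f
          linarith
    · simp only [if_neg (fun h : s₁ = s₀ ∧ t = t_t => ht1 h.2),
        if_neg (fun h : s₂ = s₀ ∧ t = t_t => ht1 h.2),
        if_neg (fun h : s₁ = s₀ ∧ t = t_f => ht2 h.2),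
        if_neg (fun h : s₂ = s₀ ∧ t = t_f => ht2 h.2)]
      have := hIP s₁ s₂ t
      linarith

end IPPaper
set_option linter.unusedSectionVars false

namespace IPPaper

open Finset

variable {S T : Type} [Fintype S] [Fintype T]

/-- Difference of potentials when two structures agree off two signals. -/
lemma Phi_split {T : Type} [Fintype T] (Q Q' : Bool → T → ℝ) (t₁ t₂ : T) (h12 : t₁ ≠ t₂)
    (hoff : ∀ y t, t ≠ t₁ → t ≠ t₂ → Q' y t = Q y t) :
    Phi Q' - Phi Q = phi (Q' true t₁) (Q' false t₁) + phi (Q' true t₂) (Q' false t₂)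
      - phi (Q true t₁) (Q false t₁) - phi (Q true t₂) (Q false t₂) := by
  unfold Phi
  rw [sum_split t₁ t₂ h12 (fun t => phi (Q' true t) (Q' false t)),
    sum_split t₁ t₂ h12 (fun t => phi (Q true t) (Q false t))]
  have : ∑ a ∈ (Finset.univ.erase t₁).erase t₂, phi (Q' true a) (Q' false a) =
      ∑ a ∈ (Finset.univ.erase t₁).erase t₂, phi (Q true a) (Q false a) := by
    refine Finset.sum_congr rfl fun a ha => ?_
    have h1' : a ≠ t₂ := (Finset.mem_erase.mp ha).1
    have h2' : a ≠ t₁ := (Finset.mem_erase.mp (Finset.mem_erase.mp ha).2).1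
    rw [hoff true a h2' h1', hoff false a h2' h1']
  rw [this]
  ring

/-- If some ε-IP information structure with the same `(S,Y)` marginal garbles onto
`P` and strictly increases the potential `Φ`, then `P` is not Blackwell optimal. -/
lemma improve {ε : ℝ} {P P' : S → Bool → T → ℝ}
    (hopt : BlackwellOptimal ε P)
    (h1 : InfoStructure P') (h2 : IsIP ε P')
    (h3 : ∀ s y, pSY P' s y = pSY P s y)
    (h4 : BlackwellDom (pYT P') (pYT P))
    (h5 : Phi (pYT P) < Phi (pYT P')) : False := by
  classical
  obtain ⟨hP, hIP, hno⟩ := hopt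
  apply hno
  set n := Fintype.card T with hn
  set e := (Fintype.equivFin T).symm with he
  refine ⟨n, fun s y i => P' s y (e i), ?_, ?_, ?_, ?_, ?_⟩
  · -- InfoStructure
    obtain ⟨g0, g1, g2⟩ := h1
    refine ⟨fun s y i => g0 s y (e i), ?_, ?_⟩
    · rw [← g1]
      refine Finset.sum_congr rfl fun s _ => Finset.sum_congr rfl fun y _ => ?_
      exact Equiv.sum_comp e (fun t => P' s y t)
    · intro s
      have : pS (fun s y (i : Fin n) => P' s y (e i)) s = pS P' s := by
        unfold pS
        refine Finset.sum_congr rfl fun y _ => ?_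
        exact Equiv.sum_comp e (fun t => P' s y t)
      rw [this]
      exact g2 s
  · -- IsIP
    intro s₁ s₂ i
    have hps : pS (fun s y (i : Fin n) => P' s y (e i)) = pS P' := by
      funext s
      unfold pS
      refine Finset.sum_congr rfl fun y _ => ?_
      exact Equiv.sum_comp e (fun t => P' s y t)
    have hpst : ∀ s, pST (fun s y (i : Fin n) => P' s y (e i)) s i = pST P' s (e i) :=
      fun s => rfl
    have hc : ∀ s, condTS (fun s y (i : Fin n) => P' s y (e i)) i s =
        condTS P' (e i) s := by
      intro s; unfold condTS; rw [hps, hpst]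
    rw [hc s₁, hc s₂]
    exact h2 s₁ s₂ (e i)
  · -- same (S,Y) marginal
    intro s y
    have : pSY (fun s y (i : Fin n) => P' s y (e i)) s y = pSY P' s y := by
      unfold pSY
      exact Equiv.sum_comp e (fun t => P' s y t)
    rw [this]
    exact h3 s y
  · -- Blackwell dominance
    obtain ⟨G, hG0, hG1, hrep⟩ := h4
    have hyt : ∀ y i, pYT (fun s y (i : Fin n) => P' s y (e i)) y i = pYT P' y (e i) :=
      fun y i => rfl
    refine ⟨fun i t => G (e i) t, fun i t => hG0 (e i) t, fun i => hG1 (e i), ?_⟩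
    intro y b
    rw [hrep y b]
    rw [← Equiv.sum_comp e (fun a => pYT P' y a * G a b)]
    rfl
  · -- no garbling back
    intro hd
    have heq : Phi (pYT (fun s y (i : Fin n) => P' s y (e i))) = Phi (pYT P') := by
      unfold Phi
      rw [← Equiv.sum_comp e (fun t => phi (pYT P' true t) (pYT P' false t))]
      rfl
    have hle := blackwellDom_phi_le (pYT P) (pYT (fun s y (i : Fin n) => P' s y (e i)))
      (fun y t => pYT_nonneg hP.1 y t) hd
    rw [heq] at hle
    linarith

end IPPaper
namespace IPPaper

/-! Tangent-line bounds for the perspective function and slope comparisons. -/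

lemma tangent_low {a q x : ℝ} (hq : 0 < q) (hxq : x < q) :
    a ^ 2 / q - (2 * a * q - a ^ 2) / q ^ 2 * x ≤ (a - x) ^ 2 / (q - x) := by
  have e : a ^ 2 / q - (2 * a * q - a ^ 2) / q ^ 2 * x
      = (a ^ 2 * q - (2 * a * q - a ^ 2) * x) / q ^ 2 := by
    field_simp
  rw [e, div_le_div_iff₀ (by positivity) (by linarith)]
  nlinarith [sq_nonneg ((q - a) * x)]

lemma tangent_high {a q x : ℝ} (hq : 0 < q) (hx : 0 ≤ x) :
    a ^ 2 / q + (2 * a * q - a ^ 2) / q ^ 2 * x ≤ (a + x) ^ 2 / (q + x) := by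
  have e : a ^ 2 / q + (2 * a * q - a ^ 2) / q ^ 2 * x
      = (a ^ 2 * q + (2 * a * q - a ^ 2) * x) / q ^ 2 := by
    field_simp
  rw [e, div_le_div_iff₀ (by positivity) (by linarith)]
  nlinarith [sq_nonneg ((q - a) * x)]

lemma tangent_low2 {a q x : ℝ} (hq : 0 < q) (hxq : x < q) :
    a ^ 2 / q + a ^ 2 / q ^ 2 * x ≤ a ^ 2 / (q - x) := by
  have e : a ^ 2 / q + a ^ 2 / q ^ 2 * x = (a ^ 2 * q + a ^ 2 * x) / q ^ 2 := by
    field_simp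
  rw [e, div_le_div_iff₀ (by positivity) (by linarith)]
  nlinarith [sq_nonneg (a * x)]

lemma tangent_high2 {a q x : ℝ} (hq : 0 < q) (hx : 0 ≤ x) :
    a ^ 2 / q - a ^ 2 / q ^ 2 * x ≤ a ^ 2 / (q + x) := by
  have e : a ^ 2 / q - a ^ 2 / q ^ 2 * x = (a ^ 2 * q - a ^ 2 * x) / q ^ 2 := by
    field_simp
  rw [e, div_le_div_iff₀ (by positivity) (by linarith)]
  nlinarith [sq_nonneg (a * x)]

lemma slope_lt {a₁ b₁ a₂ b₂ : ℝ} (ha₁ : 0 < a₁) (hb₁ : 0 < b₁) (ha₂ : 0 < a₂)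
    (hb₂ : 0 < b₂) (hρ : a₁ * (a₂ + b₂) < a₂ * (a₁ + b₁)) :
    (2 * a₁ * (a₁ + b₁) - a₁ ^ 2) / (a₁ + b₁) ^ 2
      < (2 * a₂ * (a₂ + b₂) - a₂ ^ 2) / (a₂ + b₂) ^ 2 := by
  rw [div_lt_div_iff₀ (by positivity) (by positivity)]
  have key : 0 < (a₂ * (a₁ + b₁) - a₁ * (a₂ + b₂)) *
      (2 * (a₁ + b₁) * (a₂ + b₂) - a₂ * (a₁ + b₁) - a₁ * (a₂ + b₂)) := by
    apply mul_pos (by linarith)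
    nlinarith [mul_pos hb₂ (show (0:ℝ) < a₁ + b₁ by linarith),
      mul_pos hb₁ (show (0:ℝ) < a₂ + b₂ by linarith)]
  nlinarith [key]

lemma slope2_lt {a₁ b₁ a₂ b₂ : ℝ} (ha₁ : 0 < a₁) (hb₁ : 0 < b₁) (ha₂ : 0 < a₂)
    (hb₂ : 0 < b₂) (hρ : a₁ * (a₂ + b₂) < a₂ * (a₁ + b₁)) :
    a₁ ^ 2 / (a₁ + b₁) ^ 2 < a₂ ^ 2 / (a₂ + b₂) ^ 2 := by
  rw [div_lt_div_iff₀ (by positivity) (by positivity)]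
  have key : 0 < (a₂ * (a₁ + b₁) - a₁ * (a₂ + b₂)) *
      (a₂ * (a₁ + b₁) + a₁ * (a₂ + b₂)) := by
    apply mul_pos (by linarith)
    nlinarith [mul_pos ha₂ (show (0:ℝ) < a₁ + b₁ by linarith),
      mul_pos ha₁ (show (0:ℝ) < a₂ + b₂ by linarith)]
  nlinarith [key]

end IPPaper
set_option linter.unusedSectionVars false
set_option maxHeartbeats 8000000

namespace IPPaper

open Finset

/-- monotonicity of the regions `B_t` and `C_t` along strict
inclusions of the regions `A_t`. -/
theorem statement10 {S T : Type} [Fintype S] [Fintype T] [Nonempty S]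
    (ε : ℝ) (hε : 0 ≤ ε) (P : S → Bool → T → ℝ)
    (hopt : BlackwellOptimal ε P)
    (hpos : ∀ s t, 0 < pST P s t)
    (t₁ t₂ : T) (ht₁ : inTildeT P t₁) (ht₂ : inTildeT P t₂)
    (hA : {s : S | postYST P s t₁ = 1} ⊂ {s : S | postYST P s t₂ = 1}) :
    {s : S | postYST P s t₁ = 1 ∧ condTS P t₁ s = Hval P t₁} ⊆
      {s : S | postYST P s t₂ = 1 ∧ condTS P t₂ s = Hval P t₂} ∧
    {s : S | postYST P s t₂ ≠ 1 ∧ condTS P t₂ s = Hval P t₂} ⊆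
      {s : S | postYST P s t₁ ≠ 1 ∧ condTS P t₁ s = Hval P t₁} := by
  classical
  have hI : InfoStructure P := hopt.1
  have hIP : IsIP ε P := hopt.2.1
  have h0 : ∀ s y t, 0 ≤ P s y t := hI.1
  have hpS : ∀ s, 0 < pS P s := hI.2.2
  have hsubA : {s : S | postYST P s t₁ = 1} ⊆ {s : S | postYST P s t₂ = 1} := hA.subset
  -- the degenerate case ε = 0
  by_cases hε0 : ε = 0
  · have hconst : ∀ (t : T) (s : S), condTS P t s = Hval P t := by
      intro t s
      refine le_antisymm (condTS_le_Hval P t s) ?_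
      apply Finset.sup'_le
      intro s' _
      have := hIP s' s t
      rw [hε0, Real.exp_zero, one_mul] at this
      exact this
    constructor
    · intro s₀ hs₀
      exact ⟨hsubA hs₀.1, hconst t₂ s₀⟩
    · intro s₀ hs₀
      refine ⟨fun h => hs₀.1 (hsubA h), hconst t₁ s₀⟩
  have hεpos : 0 < ε := lt_of_le_of_ne hε (Ne.symm hε0)
  -- basic positivity facts
  have hne : t₁ ≠ t₂ := by
    rintro rfl
    exact hA.2 (subset_refl _)
  have hπ₁ : 0 < pT P t₁ := ht₁.1
  have hπ₂ : 0 < pT P t₂ := ht₂.1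
  have hπe₁ : pT P t₁ = pYT P true t₁ + pYT P false t₁ := pT_eq P t₁
  have hπe₂ : pT P t₂ = pYT P true t₂ + pYT P false t₂ := pT_eq P t₂
  have ha₁ : 0 < pYT P true t₁ := by
    rcases lt_or_eq_of_le (pYT_nonneg h0 true t₁) with h | h
    · exact h
    · exfalso; exact ht₁.2.1 (by unfold postYT; rw [← h, div_eq_zero_iff]; left; rfl)
  have ha₂ : 0 < pYT P true t₂ := by
    rcases lt_or_eq_of_le (pYT_nonneg h0 true t₂) with h | h
    · exact h
    · exfalso; exact ht₂.2.1 (by unfold postYT; rw [← h, div_eq_zero_iff]; left; rfl)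
  have hb₁ : 0 < pYT P false t₁ := by
    rcases lt_or_eq_of_le (pYT_nonneg h0 false t₁) with h | h
    · exact h
    · exfalso
      apply ht₁.2.2
      unfold postYT
      rw [div_eq_one_iff_eq (ne_of_gt hπ₁)]
      rw [hπe₁, ← h]; ring
  have hb₂ : 0 < pYT P false t₂ := by
    rcases lt_or_eq_of_le (pYT_nonneg h0 false t₂) with h | h
    · exact h
    · exfalso
      apply ht₂.2.2
      unfold postYT
      rw [div_eq_one_iff_eq (ne_of_gt hπ₂)]
      rw [hπe₂, ← h]; ring
  obtain ⟨sstar, hstar₂, hstar₁⟩ := Set.exists_of_ssubset hA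
  have hstar₂' : postYST P sstar t₂ = 1 := hstar₂
  have hstar₁' : ¬ postYST P sstar t₁ = 1 := hstar₁
  have hfalse₂0 : P sstar false t₂ = 0 := (postYST_eq_one_iff (hpos sstar t₂)).mp hstar₂'
  have htrue₂ : 0 < P sstar true t₂ := by
    have := hpos sstar t₂
    rw [pST_eq, hfalse₂0] at this
    linarith
  have hfalse₁ : 0 < P sstar false t₁ := by
    rcases lt_or_eq_of_le (h0 sstar false t₁) with h | h
    · exact h
    · exact absurd ((postYST_eq_one_iff (hpos sstar t₁)).mpr h.symm) hstar₁'
  -- KEY STEP: the posterior of t₁ is strictly below the posterior of t₂.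
  have hρ : pYT P true t₁ * (pYT P true t₂ + pYT P false t₂) <
      pYT P true t₂ * (pYT P true t₁ + pYT P false t₁) := by
    by_contra hcon'
    push_neg at hcon'
    -- swap an equal amount of true mass (t₂→t₁) and false mass (t₁→t₂) of sstar
    set x := min (P sstar true t₂) (P sstar false t₁) with hxdef
    have hx : 0 < x := lt_min htrue₂ hfalse₁
    set Pin := move P sstar true t₂ t₁ x with hPin
    set P' := move Pin sstar false t₁ t₂ x with hP'
    have hvin : Pin sstar false t₁ = P sstar false t₁ := by
      simp [hPin, move]
    have hInfo' : InfoStructure P' :=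
      info_move (info_move hI hne.symm hx.le (min_le_left _ _)) hne hx.le
        (by simp [move]; exact min_le_right _ _)
    have hpST' : ∀ s t, pST P' s t = pST P s t := by
      intro s t
      rw [hP', pST_move, hPin, pST_move]
      ring
    have hpS' : ∀ s, pS P' s = pS P s := by
      intro s
      rw [hP', pS_move, hPin, pS_move]
    have hcond' : ∀ t s, condTS P' t s = condTS P t s := by
      intro t s
      unfold condTS
      rw [hpST', hpS']
    have hIsIP' : IsIP ε P' := by
      intro s₁ s₂ t
      rw [hcond', hcond']
      exact hIP s₁ s₂ t
    have hpSY' : ∀ s y, pSY P' s y = pSY P s y := by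
      intro s y
      rw [hP', pSY_move, hPin, pSY_move]
    have hv1 : pYT P' true t₁ = pYT P true t₁ + x := by
      rw [hP', pYT_move, hPin, pYT_move]
      simp [hne]
    have hv2 : pYT P' true t₂ = pYT P true t₂ - x := by
      rw [hP', pYT_move, hPin, pYT_move]
      simp [hne.symm]
    have hv3 : pYT P' false t₁ = pYT P false t₁ - x := by
      rw [hP', pYT_move, hPin, pYT_move]
      simp [hne]
    have hv4 : pYT P' false t₂ = pYT P false t₂ + x := by
      rw [hP', pYT_move, hPin, pYT_move]
      simp [hne.symm]
    have hoff : ∀ (y : Bool) (t : T), t ≠ t₁ → t ≠ t₂ → pYT P' y t = pYT P y t := by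
      intro y t h1 h2
      rw [hP', pYT_move, hPin, pYT_move]
      simp [h1, h2]
    have hDom : BlackwellDom (pYT P') (pYT P) := by
      apply twoSignalDom (pYT P) (pYT P') t₂ t₁ hne.symm
        (fun y t h2 h1 => hoff y t h1 h2)
      · rw [hv2, hv4]
        nlinarith [pYT_nonneg h0 true t₂, pYT_nonneg h0 false t₂]
      · rw [hv1, hv3]
        nlinarith [hπ₂, hπe₂]
      · rw [hv1, hv3]
        nlinarith [hπ₁, hπe₁]
      · rw [hv2, hv4]
        nlinarith [hπ₂, hπe₂]
      · rw [hv1, hv2, hv3, hv4]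
        nlinarith [mul_pos hx (show (0:ℝ) < pYT P true t₁ + pYT P false t₂ +
          pYT P true t₂ + pYT P false t₁ by linarith)]
      · rw [hv1, hv2]; ring
      · rw [hv3, hv4]; ring
    have hPhi : Phi (pYT P) < Phi (pYT P') := by
      have hd := Phi_split (pYT P) (pYT P') t₁ t₂ hne hoff
      rw [hv1, hv2, hv3, hv4] at hd
      have e1 : phi (pYT P true t₁ + x) (pYT P false t₁ - x) =
          (pYT P true t₁ + x) ^ 2 / (pYT P true t₁ + pYT P false t₁) := by
        unfold phi
        rw [show pYT P true t₁ + x + (pYT P false t₁ - x) =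
          pYT P true t₁ + pYT P false t₁ from by ring]
      have e2 : phi (pYT P true t₂ - x) (pYT P false t₂ + x) =
          (pYT P true t₂ - x) ^ 2 / (pYT P true t₂ + pYT P false t₂) := by
        unfold phi
        rw [show pYT P true t₂ - x + (pYT P false t₂ + x) =
          pYT P true t₂ + pYT P false t₂ from by ring]
      have e3 : phi (pYT P true t₁) (pYT P false t₁) =
          (pYT P true t₁) ^ 2 / (pYT P true t₁ + pYT P false t₁) := rfl
      have e4 : phi (pYT P true t₂) (pYT P false t₂) =
          (pYT P true t₂) ^ 2 / (pYT P true t₂ + pYT P false t₂) := rfl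
      rw [e1, e2, e3, e4] at hd
      have hq₁ : 0 < pYT P true t₁ + pYT P false t₁ := by rw [← hπe₁]; exact hπ₁
      have hq₂ : 0 < pYT P true t₂ + pYT P false t₂ := by rw [← hπe₂]; exact hπ₂
      have hup : (0:ℝ) <
          ((pYT P true t₁ + x) ^ 2 - (pYT P true t₁) ^ 2) / (pYT P true t₁ + pYT P false t₁)
          + ((pYT P true t₂ - x) ^ 2 - (pYT P true t₂) ^ 2) / (pYT P true t₂ + pYT P false t₂) := by
        rw [div_add_div _ _ (ne_of_gt hq₁) (ne_of_gt hq₂)]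
        apply div_pos
        · nlinarith [mul_pos hx (mul_pos hx hq₁), mul_pos hx (mul_pos hx hq₂),
            mul_nonneg hx.le (sub_nonneg.mpr hcon')]
        · exact mul_pos hq₁ hq₂
      rw [← div_sub_div_same, ← div_sub_div_same] at hup
      linarith
    exact improve hopt hInfo' hIsIP' hpSY' hDom hPhi
  -- common facts for the two moves
  have hq₁ : 0 < pYT P true t₁ + pYT P false t₁ := by linarith
  have hq₂ : 0 < pYT P true t₂ + pYT P false t₂ := by linarith
  have hE : 0 < 1 - Real.exp (-ε) := by
    have : Real.exp (-ε) < 1 := by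
      rw [← Real.exp_zero]
      exact Real.exp_lt_exp.mpr (by linarith)
    linarith
  have hee : Real.exp ε * Real.exp (-ε) = 1 := by
    rw [← Real.exp_add]; simp
  constructor
  · -- the inclusion B_{t₁} ⊆ B_{t₂}
    intro s₀ hs₀
    obtain ⟨hpost1, hcond1⟩ := hs₀
    have hpost2 : postYST P s₀ t₂ = 1 := hsubA hpost1
    refine ⟨hpost2, ?_⟩
    by_contra hcne
    have hlt : condTS P t₂ s₀ < Hval P t₂ :=
      lt_of_le_of_ne (condTS_le_Hval P t₂ s₀) hcne
    have hfalse10 : P s₀ false t₁ = 0 := (postYST_eq_one_iff (hpos s₀ t₁)).mp hpost1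
    have htrue1 : 0 < P s₀ true t₁ := by
      have := hpos s₀ t₁
      rw [pST_eq, hfalse10] at this
      linarith
    have hc₁pos : 0 < condTS P t₁ s₀ := div_pos (hpos s₀ t₁) (hpS s₀)
    have hH₁pos : 0 < Hval P t₁ := lt_of_lt_of_le hc₁pos (condTS_le_Hval P t₁ s₀)
    set x := min (P s₀ true t₁) (min (pS P s₀ * (Hval P t₂ - condTS P t₂ s₀))
      (pS P s₀ * (Hval P t₁ * (1 - Real.exp (-ε))))) with hxdef
    have hx : 0 < x := lt_min htrue1 (lt_min (mul_pos (hpS s₀) (by linarith))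
      (mul_pos (hpS s₀) (mul_pos hH₁pos hE)))
    have hxP : x ≤ P s₀ true t₁ := min_le_left _ _
    have hx2' : x / pS P s₀ ≤ Hval P t₂ - condTS P t₂ s₀ := by
      rw [div_le_iff₀ (hpS s₀), mul_comm]
      exact le_trans (min_le_right _ _) (min_le_left _ _)
    have hx3' : x / pS P s₀ ≤ Hval P t₁ * (1 - Real.exp (-ε)) := by
      rw [div_le_iff₀ (hpS s₀), mul_comm]
      exact le_trans (min_le_right _ _) (min_le_right _ _)
    set P' := move P s₀ true t₁ t₂ x with hP'
    have hInfo' : InfoStructure P' := info_move hI hne hx.le hxP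
    have hIsIP' : IsIP ε P' := by
      apply isIP_move hε hI hIP hne hx.le
      · intro s
        have h1 := Hval_le_exp_mul hIP t₂ s
        linarith [hx2']
      · intro s
        have hcs : condTS P t₁ s ≤ Hval P t₁ := condTS_le_Hval P t₁ s
        rw [hcond1]
        have hmul := mul_le_mul_of_nonneg_left hx3' (Real.exp_pos ε).le
        have e5 : Real.exp ε * (Hval P t₁ * (1 - Real.exp (-ε)))
            = Real.exp ε * Hval P t₁ - Real.exp ε * Real.exp (-ε) * Hval P t₁ := by
          ring
        rw [e5, hee, one_mul] at hmul
        have := mul_le_mul_of_nonneg_left (condTS_le_Hval P t₁ s₀) (Real.exp_pos ε).le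
        nlinarith [hmul, hcs]
    have hpSY' : ∀ s y, pSY P' s y = pSY P s y :=
      fun s y => pSY_move P s₀ true t₁ t₂ x s y
    have hv1 : pYT P' true t₁ = pYT P true t₁ - x := by
      rw [hP', pYT_move]; simp [hne]
    have hv2 : pYT P' true t₂ = pYT P true t₂ + x := by
      rw [hP', pYT_move]; simp [hne.symm]
    have hv3 : pYT P' false t₁ = pYT P false t₁ := by
      rw [hP', pYT_move]; simp
    have hv4 : pYT P' false t₂ = pYT P false t₂ := by
      rw [hP', pYT_move]; simp
    have hoff : ∀ (y : Bool) (t : T), t ≠ t₁ → t ≠ t₂ → pYT P' y t = pYT P y t := by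
      intro y t hh1 hh2
      rw [hP', pYT_move]; simp [hh1, hh2]
    have hDom : BlackwellDom (pYT P') (pYT P) := by
      apply twoSignalDom (pYT P) (pYT P') t₁ t₂ hne hoff
      · rw [hv1, hv3]
        nlinarith [mul_nonneg hx.le hb₁.le]
      · rw [hv2, hv4]
        nlinarith [mul_nonneg hx.le hb₁.le]
      · rw [hv2, hv4]
        nlinarith [mul_nonneg hx.le hb₂.le]
      · rw [hv1, hv3]
        nlinarith [mul_nonneg hx.le hb₂.le, mul_nonneg hx.le ha₂.le]
      · rw [hv1, hv2, hv3, hv4]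
        nlinarith [mul_nonneg hx.le hb₂.le, mul_nonneg hx.le hb₁.le]
      · rw [hv1, hv2]; ring
      · rw [hv3, hv4]
    have hPhi : Phi (pYT P) < Phi (pYT P') := by
      have hd := Phi_split (pYT P) (pYT P') t₁ t₂ hne hoff
      rw [hv1, hv2, hv3, hv4] at hd
      have hax : x ≤ pYT P true t₁ := le_trans hxP (le_pYT h0 s₀ true t₁)
      have hxq₁ : x < pYT P true t₁ + pYT P false t₁ := by linarith
      have e1 : phi (pYT P true t₁ - x) (pYT P false t₁) =
          (pYT P true t₁ - x) ^ 2 / (pYT P true t₁ + pYT P false t₁ - x) := by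
        unfold phi
        rw [show pYT P true t₁ - x + pYT P false t₁
          = pYT P true t₁ + pYT P false t₁ - x from by ring]
      have e2 : phi (pYT P true t₂ + x) (pYT P false t₂) =
          (pYT P true t₂ + x) ^ 2 / (pYT P true t₂ + pYT P false t₂ + x) := by
        unfold phi
        rw [show pYT P true t₂ + x + pYT P false t₂
          = pYT P true t₂ + pYT P false t₂ + x from by ring]
      have e3 : phi (pYT P true t₁) (pYT P false t₁) =
          (pYT P true t₁) ^ 2 / (pYT P true t₁ + pYT P false t₁) := rfl
      have e4 : phi (pYT P true t₂) (pYT P false t₂) =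
          (pYT P true t₂) ^ 2 / (pYT P true t₂ + pYT P false t₂) := rfl
      rw [e1, e2, e3, e4] at hd
      have T1 := tangent_low (a := pYT P true t₁)
        (q := pYT P true t₁ + pYT P false t₁) (x := x) hq₁ hxq₁
      have T2 := tangent_high (a := pYT P true t₂)
        (q := pYT P true t₂ + pYT P false t₂) (x := x) hq₂ hx.le
      have SL := slope_lt ha₁ hb₁ ha₂ hb₂ hρ
      have SLx := mul_lt_mul_of_pos_right SL hx
      linarith
    exact improve hopt hInfo' hIsIP' hpSY' hDom hPhi
  · -- the inclusion C_{t₂} ⊆ C_{t₁}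
    intro s₀ hs₀
    obtain ⟨hpost2, hcond2⟩ := hs₀
    have hpost1 : ¬ postYST P s₀ t₁ = 1 := fun h => hpost2 (hsubA h)
    refine ⟨hpost1, ?_⟩
    by_contra hcne
    have hlt : condTS P t₁ s₀ < Hval P t₁ :=
      lt_of_le_of_ne (condTS_le_Hval P t₁ s₀) hcne
    have hfalse2 : 0 < P s₀ false t₂ := by
      rcases lt_or_eq_of_le (h0 s₀ false t₂) with h | h
      · exact h
      · exact absurd ((postYST_eq_one_iff (hpos s₀ t₂)).mpr h.symm) hpost2
    have hc₂pos : 0 < condTS P t₂ s₀ := div_pos (hpos s₀ t₂) (hpS s₀)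
    have hH₂pos : 0 < Hval P t₂ := lt_of_lt_of_le hc₂pos (condTS_le_Hval P t₂ s₀)
    set x := min (P s₀ false t₂) (min (pS P s₀ * (Hval P t₁ - condTS P t₁ s₀))
      (pS P s₀ * (Hval P t₂ * (1 - Real.exp (-ε))))) with hxdef
    have hx : 0 < x := lt_min hfalse2 (lt_min (mul_pos (hpS s₀) (by linarith))
      (mul_pos (hpS s₀) (mul_pos hH₂pos hE)))
    have hxP : x ≤ P s₀ false t₂ := min_le_left _ _
    have hx2' : x / pS P s₀ ≤ Hval P t₁ - condTS P t₁ s₀ := by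
      rw [div_le_iff₀ (hpS s₀), mul_comm]
      exact le_trans (min_le_right _ _) (min_le_left _ _)
    have hx3' : x / pS P s₀ ≤ Hval P t₂ * (1 - Real.exp (-ε)) := by
      rw [div_le_iff₀ (hpS s₀), mul_comm]
      exact le_trans (min_le_right _ _) (min_le_right _ _)
    set P' := move P s₀ false t₂ t₁ x with hP'
    have hInfo' : InfoStructure P' := info_move hI hne.symm hx.le hxP
    have hIsIP' : IsIP ε P' := by
      apply isIP_move hε hI hIP hne.symm hx.le
      · intro s
        have h1 := Hval_le_exp_mul hIP t₁ s
        linarith [hx2']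
      · intro s
        have hcs : condTS P t₂ s ≤ Hval P t₂ := condTS_le_Hval P t₂ s
        rw [hcond2]
        have hmul := mul_le_mul_of_nonneg_left hx3' (Real.exp_pos ε).le
        have e5 : Real.exp ε * (Hval P t₂ * (1 - Real.exp (-ε)))
            = Real.exp ε * Hval P t₂ - Real.exp ε * Real.exp (-ε) * Hval P t₂ := by
          ring
        rw [e5, hee, one_mul] at hmul
        have := mul_le_mul_of_nonneg_left (condTS_le_Hval P t₂ s₀) (Real.exp_pos ε).le
        nlinarith [hmul, hcs]
    have hpSY' : ∀ s y, pSY P' s y = pSY P s y :=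
      fun s y => pSY_move P s₀ false t₂ t₁ x s y
    have hv1 : pYT P' true t₁ = pYT P true t₁ := by
      rw [hP', pYT_move]; simp
    have hv2 : pYT P' true t₂ = pYT P true t₂ := by
      rw [hP', pYT_move]; simp
    have hv3 : pYT P' false t₁ = pYT P false t₁ + x := by
      rw [hP', pYT_move]; simp [hne]
    have hv4 : pYT P' false t₂ = pYT P false t₂ - x := by
      rw [hP', pYT_move]; simp [hne.symm]
    have hoff : ∀ (y : Bool) (t : T), t ≠ t₁ → t ≠ t₂ → pYT P' y t = pYT P y t := by
      intro y t hh1 hh2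
      rw [hP', pYT_move]; simp [hh1, hh2]
    have hDom : BlackwellDom (pYT P') (pYT P) := by
      apply twoSignalDom (pYT P) (pYT P') t₁ t₂ hne hoff
      · rw [hv1, hv3]
        nlinarith [mul_nonneg hx.le ha₁.le]
      · rw [hv2, hv4]
        nlinarith [mul_nonneg hx.le ha₁.le]
      · rw [hv2, hv4]
        nlinarith [mul_nonneg hx.le ha₂.le]
      · rw [hv1, hv3]
        nlinarith [mul_nonneg hx.le ha₂.le]
      · rw [hv1, hv2, hv3, hv4]
        nlinarith [mul_nonneg hx.le ha₂.le, mul_nonneg hx.le ha₁.le]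
      · rw [hv1, hv2]
      · rw [hv3, hv4]; ring
    have hPhi : Phi (pYT P) < Phi (pYT P') := by
      have hd := Phi_split (pYT P) (pYT P') t₁ t₂ hne hoff
      rw [hv1, hv2, hv3, hv4] at hd
      have hax : x ≤ pYT P false t₂ := le_trans hxP (le_pYT h0 s₀ false t₂)
      have hxq₂ : x < pYT P true t₂ + pYT P false t₂ := by linarith
      have e1 : phi (pYT P true t₁) (pYT P false t₁ + x) =
          (pYT P true t₁) ^ 2 / (pYT P true t₁ + pYT P false t₁ + x) := by
        unfold phi
        rw [show pYT P true t₁ + (pYT P false t₁ + x)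
          = pYT P true t₁ + pYT P false t₁ + x from by ring]
      have e2 : phi (pYT P true t₂) (pYT P false t₂ - x) =
          (pYT P true t₂) ^ 2 / (pYT P true t₂ + pYT P false t₂ - x) := by
        unfold phi
        rw [show pYT P true t₂ + (pYT P false t₂ - x)
          = pYT P true t₂ + pYT P false t₂ - x from by ring]
      have e3 : phi (pYT P true t₁) (pYT P false t₁) =
          (pYT P true t₁) ^ 2 / (pYT P true t₁ + pYT P false t₁) := rfl
      have e4 : phi (pYT P true t₂) (pYT P false t₂) =
          (pYT P true t₂) ^ 2 / (pYT P true t₂ + pYT P false t₂) := rfl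
      rw [e1, e2, e3, e4] at hd
      have T1 := tangent_high2 (a := pYT P true t₁)
        (q := pYT P true t₁ + pYT P false t₁) (x := x) hq₁ hx.le
      have T2 := tangent_low2 (a := pYT P true t₂)
        (q := pYT P true t₂ + pYT P false t₂) (x := x) hq₂ hxq₂
      have SL := slope2_lt ha₁ hb₁ ha₂ hb₂ hρ
      have SLx := mul_lt_mul_of_pos_right SL hx
      linarith
    exact improve hopt hInfo' hIsIP' hpSY' hDom hPhi

end IPPaper
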